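/- Let {c_j ∈ Z/2 : j = 0,...,M−1}, M odd, satisfy ∑_{j=0}^{M−1} c_j ≡ 0 (mod 2) and suppose the periodic extension {c_{j mod M}} has least period exactly M. Let H_0,...,H_{M−1} be compatible ergodic maps Z_2 → Z_2 and define x_{i+1} = (c'_{i mod M} + H_{i mod M}(x_i)) mod 2^n where c'_j ∈ Z/2^n reduces to c_j mod 2. Then the state sequence {x_i} is purely periodic with period length exactly M·2^n, and every element of Z/2^n occurs exactly M times per period. -/

import Mathlib

open scoped BigOperators

/-- The `j`-th binary digit of a 2-adic integer, as an element of `ZMod 2`. -/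
noncomputable def bit2 (j : ℕ) (x : ℤ_[2]) : ZMod 2 := ((x.appr (j+1) / 2^j : ℕ) : ZMod 2)

/-- Compatibility = 1-Lipschitz w.r.t. the 2-adic metric. -/
def Compatible (f : ℤ_[2] → ℤ_[2]) : Prop := ∀ x y : ℤ_[2], ‖f x - f y‖ ≤ ‖x - y‖

/-- Reduction of a 2-adic integer modulo `2^n`. -/
noncomputable def padMod (n : ℕ) (x : ℤ_[2]) : ZMod (2^n) := (x.appr n : ZMod (2^n))

/-- The map induced by `f : ℤ₂ → ℤ₂` on `ZMod (2^n)` (via canonical lifts). -/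
noncomputable def inducedMap (n : ℕ) (f : ℤ_[2] → ℤ_[2]) : ZMod (2^n) → ZMod (2^n) :=
  fun a => padMod n (f ((a.val : ℕ) : ℤ_[2]))

/-- A self-map of a set is a single cycle (transitive on points). -/
def IsSingleCycle {α : Type*} (g : α → α) : Prop := ∀ a b : α, ∃ k : ℕ, g^[k] a = b

/-- Measure preservation: `f` induces a bijection modulo `2^n` for every `n`. -/
def MeasurePreservingZ (f : ℤ_[2] → ℤ_[2]) : Prop := ∀ n : ℕ, Function.Bijective (inducedMap n f)

/-- Ergodicity: `f` induces a single-cycle permutation modulo `2^n` for every `n`. -/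
def ErgodicZ (f : ℤ_[2] → ℤ_[2]) : Prop := ∀ n : ℕ, IsSingleCycle (inducedMap n f)

/-- Induced map modulo `2^n` of an `m`-variate map on `(ℤ₂)^m`. -/
noncomputable def inducedMapM (m n : ℕ) (G : (Fin m → ℤ_[2]) → Fin m → ℤ_[2]) :
    (Fin m → ZMod (2^n)) → Fin m → ZMod (2^n) :=
  fun a j => padMod n (G (fun i => (((a i).val : ℕ) : ℤ_[2])) j)

/-- Coordinatewise compatibility of an `m`-variate map. -/
def CompatibleM (m : ℕ) (G : (Fin m → ℤ_[2]) → Fin m → ℤ_[2]) : Prop :=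
  ∀ (n : ℕ) (x y : Fin m → ℤ_[2]), (∀ i, padMod n (x i) = padMod n (y i)) →
    ∀ j, padMod n (G x j) = padMod n (G y j)

/-- Ergodicity of an `m`-variate map: single cycle modulo `2^n` for all `n`. -/
def ErgodicM (m : ℕ) (G : (Fin m → ℤ_[2]) → Fin m → ℤ_[2]) : Prop :=
  ∀ n : ℕ, IsSingleCycle (inducedMapM m n G)

/-- The 2-adic integer with prescribed binary digits. -/
noncomputable def ofBits (b : ℕ → ZMod 2) : ℤ_[2] := ∑' i : ℕ, ((b i).val : ℤ_[2]) * 2^i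

/-- Bitwise XOR of 2-adic integers. -/
noncomputable def xor2 (x y : ℤ_[2]) : ℤ_[2] := ofBits (fun i => bit2 i x + bit2 i y)

/-- Bitwise AND of 2-adic integers. -/
noncomputable def and2 (x y : ℤ_[2]) : ℤ_[2] := ofBits (fun i => bit2 i x * bit2 i y)

/-- Bitwise AND of a list, the empty AND being `-1` (the all-ones string). -/
noncomputable def andL (l : List ℤ_[2]) : ℤ_[2] := l.foldr and2 (-1)

lemma padMod_hom (n : ℕ) : padMod n = PadicInt.toZModPow n := rfl

lemma padMod_eq_iff (m : ℕ) (u v : ℤ_[2]) :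
    padMod m u = padMod m v ↔ (2:ℤ_[2])^m ∣ u - v := by
  rw [padMod_hom, ← sub_eq_zero, ← map_sub, ← RingHom.mem_ker, PadicInt.ker_toZModPow,
    Ideal.mem_span_singleton]
  norm_num

lemma padMod_natCast (n : ℕ) (m : ℕ) : padMod n (m : ℤ_[2]) = (m : ZMod (2^n)) := by
  rw [padMod_hom, map_natCast]

lemma padMod_add (n : ℕ) (u v : ℤ_[2]) : padMod n (u + v) = padMod n u + padMod n v := by
  rw [padMod_hom, map_add]

lemma padMod_val (n : ℕ) (a : ZMod (2^n)) : padMod n ((a.val : ℕ) : ℤ_[2]) = a := by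
  rw [padMod_natCast]; simp [ZMod.natCast_val, ZMod.cast_id]

/-- compatibility transfer -/
lemma compat_padMod {f : ℤ_[2] → ℤ_[2]} (hf : Compatible f) {m : ℕ} {u v : ℤ_[2]}
    (h : padMod m u = padMod m v) : padMod m (f u) = padMod m (f v) := by
  rw [padMod_eq_iff] at h ⊢
  have h2 : ((2:ℕ):ℤ_[2]) = (2:ℤ_[2]) := by norm_num
  have hn : ‖u - v‖ ≤ ((2:ℕ):ℝ)^(-(m:ℤ)) := by
    rw [PadicInt.norm_le_pow_iff_mem_span_pow, Ideal.mem_span_singleton, h2]; exact h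
  have := le_trans (hf u v) hn
  rw [PadicInt.norm_le_pow_iff_mem_span_pow, Ideal.mem_span_singleton, h2] at this
  exact this

lemma inducedMap_padMod {f : ℤ_[2] → ℤ_[2]} (hf : Compatible f) (m : ℕ) (z : ℤ_[2]) :
    inducedMap m f (padMod m z) = padMod m (f z) := by
  unfold inducedMap
  exact compat_padMod hf (padMod_val m (padMod m z))

/-- reduction across levels -/
lemma padMod_lower {m n : ℕ} (h : m ≤ n) (z : ℤ_[2]) :
    padMod m (((padMod n z).val : ℕ) : ℤ_[2]) = padMod m z := by
  rw [padMod_eq_iff]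
  have := (padMod_eq_iff n ((((padMod n z).val : ℕ) : ℤ_[2])) z).1 (by rw [padMod_val])
  exact dvd_trans (pow_dvd_pow _ h) this

set_option linter.unusedSectionVars false
section SingleCycle
variable {α : Type*} [Fintype α] [Nonempty α] {g : α → α}

lemma IsSingleCycle.surjective (hg : IsSingleCycle g) : Function.Surjective g := by
  intro b
  obtain ⟨w⟩ := ‹Nonempty α›
  obtain ⟨k, hk⟩ := hg (g w) b
  refine ⟨g^[k] w, ?_⟩
  rw [← Function.iterate_succ_apply' g k w, Function.iterate_succ_apply]
  exact hk

lemma IsSingleCycle.bijective (hg : IsSingleCycle g) : Function.Bijective g :=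
  Finite.surjective_iff_bijective.mp hg.surjective

lemma iterate_mul_period {w : α} {m : ℕ} (hm : g^[m] w = w) (q : ℕ) : g^[m*q] w = w := by
  induction q with
  | zero => simp
  | succ q ih => rw [Nat.mul_succ, Function.iterate_add_apply, hm, ih]

lemma IsSingleCycle.no_small_period (hg : IsSingleCycle g) (w : α) (m : ℕ)
    (hm0 : 0 < m) (hmN : m < Fintype.card α) : g^[m] w ≠ w := by
  intro hfix
  have hsur : Function.Surjective (fun i : Fin m => g^[i] w) := by
    intro b
    obtain ⟨k, hk⟩ := hg w b
    refine ⟨⟨k % m, Nat.mod_lt _ hm0⟩, ?_⟩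
    have : g^[k] w = g^[k % m] (g^[m * (k/m)] w) := by
      rw [← Function.iterate_add_apply]
      congr 1
      exact (Nat.mod_add_div k m).symm
    simp only [this, iterate_mul_period hfix] at hk
    exact hk
  have := Fintype.card_le_of_surjective _ hsur
  simp at this
  omega
end SingleCycle

section SingleCycle2
set_option linter.unusedSectionVars false
variable {α : Type*} [Fintype α] [Nonempty α] {g : α → α}

lemma iterate_cancel_inj (hinj : Function.Injective g) {x : α} {i j : ℕ} (hij : i ≤ j)
    (h : g^[i] x = g^[j] x) : g^[j - i] x = x := by
  have h2 : g^[i] (g^[j-i] x) = g^[j] x := by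
    rw [← Function.iterate_add_apply]
    congr 1
    omega
  exact (Function.Injective.iterate hinj i) (h2.trans h.symm)

lemma iterate_cancel_ret {x : α} {N i j : ℕ} (hret : g^[N] x = x) (hij : i ≤ j) (hjN : j ≤ N)
    (h : g^[i] x = g^[j] x) : g^[N - j + i] x = x := by
  have h2 : g^[N - j] (g^[j] x) = x := by
    rw [← Function.iterate_add_apply]
    have : N - j + j = N := by omega
    rw [this, hret]
  rw [← h, ← Function.iterate_add_apply] at h2
  exact h2

lemma IsSingleCycle.iterate_card (hg : IsSingleCycle g) (w : α) :
    g^[Fintype.card α] w = w := by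
  set N := Fintype.card α with hN
  have hNpos : 0 < N := Fintype.card_pos
  have hninj : ¬ Function.Injective (fun i : Fin (N+1) => g^[(i:ℕ)] w) := by
    intro h
    have := Fintype.card_le_of_injective _ h
    simp [hN] at this
  rw [Function.not_injective_iff] at hninj
  obtain ⟨i, j, hij, hne⟩ := hninj
  have hij' : g^[(i:ℕ)] w = g^[(j:ℕ)] w := hij
  have key : ∀ a b : ℕ, a < b → b ≤ N → g^[a] w = g^[b] w → g^[N] w = w := by
    intro a b hab hbN hE
    have := iterate_cancel_inj hg.bijective.1 (le_of_lt hab) hE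
    rcases eq_or_lt_of_le (show b - a ≤ N by omega) with he | hl
    · rw [← he]; exact this
    · exact absurd this (hg.no_small_period w _ (by omega) hl)
  rcases lt_trichotomy (i:ℕ) (j:ℕ) with h | h | h
  · exact key _ _ h (by omega) hij'
  · exact absurd (Fin.ext h) hne
  · exact key _ _ h (by omega) hij'.symm

lemma IsSingleCycle.period_dvd (hg : IsSingleCycle g) {w : α} {m : ℕ}
    (hm : g^[m] w = w) : Fintype.card α ∣ m := by
  set N := Fintype.card α
  have hNpos : 0 < N := Fintype.card_pos
  have hr : g^[m % N] w = w := by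
    have : g^[m % N + N * (m/N)] w = w := by rw [Nat.mod_add_div]; exact hm
    rw [Function.iterate_add_apply, iterate_mul_period (hg.iterate_card w)] at this
    exact this
  rcases Nat.eq_zero_or_pos (m % N) with h0 | hpos
  · exact Nat.dvd_of_mod_eq_zero h0
  · exact absurd hr (hg.no_small_period w _ hpos (Nat.mod_lt _ hNpos))

lemma IsSingleCycle.card_le_period (hg : IsSingleCycle g) {w : α} {m : ℕ}
    (hm0 : 0 < m) (hm : g^[m] w = w) : Fintype.card α ≤ m :=
  Nat.le_of_dvd hm0 (hg.period_dvd hm)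

lemma enum_injective {w : α} {N : ℕ} (hNcard : N = Fintype.card α)
    (hfull : ∀ m : ℕ, 0 < m → m < N → g^[m] w ≠ w)
    (hret : g^[N] w = w) : Function.Injective (fun i : Fin N => g^[(i:ℕ)] w) := by
  intro i j hij
  have hij' : g^[(i:ℕ)] w = g^[(j:ℕ)] w := hij
  have key : ∀ a b : ℕ, a < b → b < N → g^[a] w = g^[b] w → False := by
    intro a b hab hbN hE
    have := iterate_cancel_ret hret (le_of_lt hab) (le_of_lt hbN) hE
    exact hfull _ (by omega) (by omega) this
  rcases lt_trichotomy (i:ℕ) (j:ℕ) with h | h | h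
  · exact absurd hij' (fun hE => key _ _ h j.isLt hE)
  · exact Fin.ext h
  · exact absurd hij'.symm (fun hE => key _ _ h i.isLt hE)

lemma isSingleCycle_of_orbit {w : α}
    (hfull : ∀ m : ℕ, 0 < m → m < Fintype.card α → g^[m] w ≠ w)
    (hret : g^[Fintype.card α] w = w) : IsSingleCycle g := by
  set N := Fintype.card α with hN
  have hinj := enum_injective (g := g) (w := w) hN hfull hret
  have hsur : Function.Surjective (fun i : Fin N => g^[(i:ℕ)] w) :=
    ((Fintype.bijective_iff_injective_and_card _).2 ⟨hinj, by simp [hN]⟩).2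
  intro a b
  obtain ⟨i, ha⟩ := hsur a
  obtain ⟨j, hb⟩ := hsur b
  have ha' : g^[(i:ℕ)] w = a := ha
  have hb' : g^[(j:ℕ)] w = b := hb
  refine ⟨(j:ℕ) + (N - (i:ℕ)), ?_⟩
  rw [← ha', ← Function.iterate_add_apply]
  have : (j:ℕ) + (N - (i:ℕ)) + (i:ℕ) = (j:ℕ) + N := by omega
  rw [this, Function.iterate_add_apply, hret, hb']

lemma IsSingleCycle.enum_bijective (hg : IsSingleCycle g) (w : α) :
    Function.Bijective (fun i : Fin (Fintype.card α) => g^[(i:ℕ)] w) := by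
  have hinj := enum_injective (g := g) (w := w) rfl
    (fun m hm0 hmN => hg.no_small_period w m hm0 hmN) (hg.iterate_card w)
  exact (Fintype.bijective_iff_injective_and_card _).2 ⟨hinj, by simp⟩
end SingleCycle2

/-! ## Lifting machinery between `ZMod (2^k)` and `ZMod (2^(k+1))` -/

section Lifting
variable (k : ℕ)

noncomputable def sMap : ZMod (2^k) → ZMod (2^(k+1)) := fun y => ((y.val : ℕ) : ZMod (2^(k+1)))
noncomputable def iota : ZMod 2 → ZMod (2^(k+1)) := fun ε => ((2^k * ε.val : ℕ) : ZMod (2^(k+1)))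
noncomputable def hiMap : ZMod (2^(k+1)) → ZMod 2 := fun a => ((a.val / 2^k : ℕ) : ZMod 2)
noncomputable def redMap : ZMod (2^(k+1)) → ZMod (2^k) := fun a => ((a.val : ℕ) : ZMod (2^k))

variable {k}

lemma nat_div_mod_pow (u : ℕ) : ((u % 2^(k+1) / 2^k : ℕ) : ZMod 2) = ((u / 2^k : ℕ) : ZMod 2) := by
  have h1 : u / 2^k = u % 2^(k+1) / 2^k + 2 * (u / 2^(k+1)) := by
    conv_lhs => rw [← Nat.mod_add_div u (2^(k+1))]
    rw [show 2^(k+1) * (u / 2^(k+1)) = 2^k * (2 * (u / 2^(k+1))) by ring,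
      Nat.add_mul_div_left _ _ (Nat.two_pow_pos k)]
  rw [h1]
  push_cast
  simp [CharTwo.two_eq_zero]

lemma nat_mod_pow_castdown (u : ℕ) : ((u % 2^(k+1) : ℕ) : ZMod (2^k)) = (u : ZMod (2^k)) := by
  rw [ZMod.natCast_eq_natCast_iff]
  exact (Nat.mod_modEq u (2^(k+1))).of_dvd (pow_dvd_pow 2 (Nat.le_succ k))

lemma hi_natCast (u : ℕ) : hiMap k ((u : ZMod (2^(k+1)))) = ((u / 2^k : ℕ) : ZMod 2) := by
  unfold hiMap
  rw [ZMod.val_natCast, nat_div_mod_pow]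

lemma red_natCast (u : ℕ) : redMap k ((u : ZMod (2^(k+1)))) = (u : ZMod (2^k)) := by
  unfold redMap
  rw [ZMod.val_natCast, nat_mod_pow_castdown]

lemma zmod2_cases (ε : ZMod 2) : ε = 0 ∨ ε = 1 := by revert ε; decide

lemma zmod2_ne {a b : ZMod 2} (h : a ≠ b) : a = b + 1 := by revert h; revert a b; decide

lemma iota_zero : iota k 0 = 0 := by unfold iota; norm_num

lemma iota_add (ε δ : ZMod 2) : iota k (ε + δ) = iota k ε + iota k δ := by
  rcases zmod2_cases ε with rfl | rfl <;> rcases zmod2_cases δ with rfl | rfl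
  · simp [iota_zero]
  · simp [iota_zero]
  · simp [iota_zero]
  · have h11 : ((1:ZMod 2) + 1) = 0 := by decide
    rw [h11, iota_zero]
    have hval : ((1:ZMod 2)).val = 1 := rfl
    unfold iota
    rw [hval, Nat.mul_one, ← Nat.cast_add,
      show (2:ℕ)^k + 2^k = 2^(k+1) by ring, ZMod.natCast_self]

lemma s_iota_natCast (y : ZMod (2^k)) (ε : ZMod 2) :
    sMap k y + iota k ε = ((y.val + 2^k * ε.val : ℕ) : ZMod (2^(k+1))) := by
  unfold sMap iota; push_cast; ring

lemma s_iota_val (y : ZMod (2^k)) (ε : ZMod 2) :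
    (sMap k y + iota k ε).val = y.val + 2^k * ε.val := by
  rw [s_iota_natCast, ZMod.val_natCast_of_lt]
  have h1 : y.val < 2^k := ZMod.val_lt y
  have h2 : ε.val < 2 := ZMod.val_lt ε
  have : 2^(k+1) = 2^k * 2 := by ring
  nlinarith

lemma red_s_iota (y : ZMod (2^k)) (ε : ZMod 2) : redMap k (sMap k y + iota k ε) = y := by
  rw [s_iota_natCast, red_natCast, Nat.cast_add, Nat.cast_mul, ZMod.natCast_self, zero_mul,
    add_zero]
  simp [ZMod.natCast_val, ZMod.cast_id]

lemma hi_s_iota (y : ZMod (2^k)) (ε : ZMod 2) : hiMap k (sMap k y + iota k ε) = ε := by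
  rw [s_iota_natCast, hi_natCast]
  have h1 : y.val < 2^k := ZMod.val_lt y
  have : (y.val + 2^k * ε.val) / 2^k = ε.val := by
    rw [Nat.add_mul_div_left _ _ (Nat.two_pow_pos k),
      Nat.div_eq_of_lt h1, Nat.zero_add]
  rw [this]
  simp [ZMod.natCast_val, ZMod.cast_id]

lemma decomp (a : ZMod (2^(k+1))) : sMap k (redMap k a) + iota k (hiMap k a) = a := by
  have hv : a.val < 2^(k+1) := ZMod.val_lt a
  have hd : a.val / 2^k < 2 := by
    rw [Nat.div_lt_iff_lt_mul (Nat.two_pow_pos k)]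
    calc a.val < 2^(k+1) := hv
    _ = 2 * 2^k := by ring
  unfold sMap iota hiMap redMap
  rw [ZMod.val_natCast, ZMod.val_natCast, Nat.mod_eq_of_lt hd, ← Nat.cast_add,
    Nat.mod_add_div]
  simp [ZMod.natCast_val, ZMod.cast_id]
end Lifting

section Lifting2
variable {k : ℕ}

def Lifts (k : ℕ) (G : ZMod (2^(k+1)) → ZMod (2^(k+1)))
    (Gb : ZMod (2^k) → ZMod (2^k)) (ψ : ZMod (2^k) → ZMod 2) : Prop :=
  ∀ y ε, G (sMap k y + iota k ε) = sMap k (Gb y) + iota k (ψ y + ε)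

lemma add_iota_decomp (v : ZMod (2^(k+1))) (δ : ZMod 2) :
    v + iota k δ = sMap k (redMap k v) + iota k (hiMap k v + δ) := by
  rw [iota_add, ← add_assoc, decomp]

lemma hi_add_iota (v : ZMod (2^(k+1))) (δ : ZMod 2) :
    hiMap k (v + iota k δ) = hiMap k v + δ := by
  rw [add_iota_decomp, hi_s_iota]

lemma Lifts.red_comm {G Gb ψ} (L : Lifts k G Gb ψ) (a : ZMod (2^(k+1))) :
    redMap k (G a) = Gb (redMap k a) := by
  conv_lhs => rw [← decomp a]
  rw [L, red_s_iota]

lemma Lifts.red_iterate {G Gb ψ} (L : Lifts k G Gb ψ) (m : ℕ) (a : ZMod (2^(k+1))) :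
    redMap k (G^[m] a) = Gb^[m] (redMap k a) := by
  induction m with
  | zero => simp
  | succ m ih => rw [Function.iterate_succ_apply', Function.iterate_succ_apply', L.red_comm, ih]

lemma s_val (y : ZMod (2^k)) : (sMap k y).val = y.val :=
  ZMod.val_natCast_of_lt (lt_of_lt_of_le (ZMod.val_lt y)
    (Nat.pow_le_pow_right (by norm_num) (Nat.le_succ k)))

lemma red_padMod (z : ℤ_[2]) : redMap k (padMod (k+1) z) = padMod k z := by
  unfold redMap
  rw [← padMod_natCast]
  exact padMod_lower (Nat.le_succ k) z

lemma padMod_natCast_addmul (y : ZMod (2^k)) (e : ℕ) :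
    padMod k (((y.val + 2^k * e : ℕ) : ℤ_[2])) = padMod k ((y.val : ℕ) : ℤ_[2]) := by
  rw [padMod_natCast, padMod_natCast, Nat.cast_add, Nat.cast_mul, ZMod.natCast_self, zero_mul,
    add_zero]

lemma lifts_induced {f : ℤ_[2] → ℤ_[2]} (hf : Compatible f)
    (hinj : Function.Injective (inducedMap (k+1) f)) :
    Lifts k (inducedMap (k+1) f) (inducedMap k f)
      (fun y => hiMap k (inducedMap (k+1) f (sMap k y))) := by
  intro y ε
  set G := inducedMap (k+1) f with hG
  have hred : ∀ ε : ZMod 2, redMap k (G (sMap k y + iota k ε)) = inducedMap k f y := by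
    intro ε
    show redMap k (padMod (k+1) (f (((sMap k y + iota k ε).val : ℕ) : ℤ_[2]))) = _
    rw [red_padMod]
    refine compat_padMod hf ?_
    rw [s_iota_val]
    exact padMod_natCast_addmul y ε.val
  have hform : ∀ ε : ZMod 2, G (sMap k y + iota k ε) =
      sMap k (inducedMap k f y) + iota k (hiMap k (G (sMap k y + iota k ε))) := by
    intro ε
    conv_lhs => rw [← decomp (G (sMap k y + iota k ε))]
    rw [hred]
  have hs0 : sMap k y + iota k 0 = sMap k y := by rw [iota_zero, add_zero]
  rcases zmod2_cases ε with rfl | rfl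
  · rw [hform 0, add_zero]
    congr 2
    rw [hs0]
  · have hne : hiMap k (G (sMap k y + iota k 1)) ≠ hiMap k (G (sMap k y + iota k 0)) := by
      intro hEq
      have : G (sMap k y + iota k 1) = G (sMap k y + iota k 0) := by
        rw [hform 1, hform 0, hEq]
      have h2 := hinj this
      have h3 := congrArg (hiMap k) h2
      rw [hi_s_iota, hi_s_iota] at h3
      exact one_ne_zero h3
    rw [hform 1, zmod2_ne hne]
    congr 2
    rw [hs0]

lemma Lifts.iterate {G Gb ψ} (L : Lifts k G Gb ψ) (m : ℕ) (y : ZMod (2^k)) (ε : ZMod 2) :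
    G^[m] (sMap k y + iota k ε) =
      sMap k (Gb^[m] y) + iota k (ε + ∑ i ∈ Finset.range m, ψ (Gb^[i] y)) := by
  induction m with
  | zero => simp
  | succ m ih =>
    rw [Function.iterate_succ_apply', ih, L, Function.iterate_succ_apply',
      Finset.sum_range_succ]
    congr 2
    ring

lemma enum_bijective' {α : Type*} [Fintype α] [Nonempty α] {g : α → α}
    (hg : IsSingleCycle g) (w : α) {N : ℕ} (hN : N = Fintype.card α) :
    Function.Bijective (fun i : Fin N => g^[(i:ℕ)] w) := by
  subst hN; exact hg.enum_bijective w

lemma Lifts.iterate_pow {G Gb ψ} (L : Lifts k G Gb ψ) (hGb : IsSingleCycle Gb)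
    (a : ZMod (2^(k+1))) :
    G^[2^k] a = a + iota k (∑ y : ZMod (2^k), ψ y) := by
  have cardβ : Fintype.card (ZMod (2^k)) = 2^k := ZMod.card _
  have hGbN : Gb^[2^k] (redMap k a) = redMap k a := by
    have := hGb.iterate_card (redMap k a)
    rwa [cardβ] at this
  have hsum : ∑ i ∈ Finset.range (2^k), ψ (Gb^[i] (redMap k a)) = ∑ y : ZMod (2^k), ψ y := by
    rw [← Fin.sum_univ_eq_sum_range (fun i => ψ (Gb^[i] (redMap k a))) (2^k)]
    exact Fintype.sum_bijective _ (enum_bijective' hGb (redMap k a) cardβ.symm)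
      _ _ (fun i => rfl)
  conv_lhs => rw [← decomp a]
  rw [L.iterate, hGbN, hsum, iota_add, ← add_assoc, decomp]

lemma iota_one_ne_zero : iota k 1 ≠ 0 := by
  intro h
  have hval : (iota k 1).val = 2^k := by
    unfold iota
    rw [show (2^k * (1:ZMod 2).val) = 2^k by norm_num [show ((1:ZMod 2)).val = 1 from rfl]]
    refine ZMod.val_natCast_of_lt ?_
    have h2 : (2:ℕ)^(k+1) = 2 * 2^k := by ring
    have h3 : 0 < (2:ℕ)^k := Nat.two_pow_pos k
    omega
  rw [h, ZMod.val_zero] at hval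
  have h3 : 0 < (2:ℕ)^k := Nat.two_pow_pos k
  omega
end Lifting2

section Lifting3
variable {k : ℕ}

lemma two_pow_pos (k : ℕ) : 0 < (2:ℕ)^k := Nat.two_pow_pos k

lemma lifts_single_cycle {G Gb ψ} (L : Lifts k G Gb ψ) (hGb : IsSingleCycle Gb)
    (hsum : ∑ y : ZMod (2^k), ψ y = 1) : IsSingleCycle G := by
  have cardβ : Fintype.card (ZMod (2^k)) = 2^k := ZMod.card _
  have cardα : Fintype.card (ZMod (2^(k+1))) = 2^(k+1) := ZMod.card _
  have hGN : ∀ a, G^[2^k] a = a + iota k 1 := by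
    intro a
    rw [L.iterate_pow hGb, hsum]
  have hG2N : ∀ a, G^[2^(k+1)] a = a := by
    intro a
    have h : G^[2^k] (G^[2^k] a) = a := by
      rw [hGN, hGN, add_assoc, ← iota_add, show ((1:ZMod 2) + 1) = 0 by decide, iota_zero,
        add_zero]
    rw [← Function.iterate_add_apply] at h
    convert h using 2
    ring
  have hsmall : ∀ (a : ZMod (2^(k+1))) (m : ℕ), 0 < m → m < 2^(k+1) → G^[m] a ≠ a := by
    intro a m hm0 hmlt hEq
    have hred : Gb^[m] (redMap k a) = redMap k a := by
      rw [← L.red_iterate, hEq]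
    have hdvd : 2^k ∣ m := by
      have := hGb.period_dvd hred
      rwa [cardβ] at this
    obtain ⟨t, rfl⟩ := hdvd
    have h2 : (2:ℕ)^(k+1) = 2^k * 2 := by ring
    have h3 := two_pow_pos k
    have ht : t = 1 := by nlinarith
    subst ht
    rw [Nat.mul_one, hGN] at hEq
    exact iota_one_ne_zero (by rwa [add_eq_left] at hEq)
  refine isSingleCycle_of_orbit (w := 0) ?_ ?_
  · intro m hm0 hmN
    exact hsmall 0 m hm0 (by rwa [cardα] at hmN)
  · rw [cardα]; exact hG2N 0

lemma lifts_sum_one {G Gb ψ} (L : Lifts k G Gb ψ) (hGb : IsSingleCycle Gb)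
    (hG : IsSingleCycle G) : ∑ y : ZMod (2^k), ψ y = 1 := by
  have cardα : Fintype.card (ZMod (2^(k+1))) = 2^(k+1) := ZMod.card _
  rcases zmod2_cases (∑ y : ZMod (2^k), ψ y) with h0 | h1
  · exfalso
    have hfix : G^[2^k] 0 = 0 := by
      rw [L.iterate_pow hGb, h0, iota_zero, add_zero]
    refine hG.no_small_period 0 (2^k) (two_pow_pos k) ?_ hfix
    rw [cardα]
    exact Nat.pow_lt_pow_right (by norm_num) (Nat.lt_succ_self k)
  · exact h1

lemma sum_div_consecutive (m : ℕ) (hm : 0 < m) (c : ℕ) :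
    ∑ t ∈ Finset.range m, (c + t)/m = c := by
  induction c with
  | zero =>
    refine Finset.sum_eq_zero ?_
    intro t ht
    rw [Nat.zero_add]
    exact Nat.div_eq_of_lt (Finset.mem_range.mp ht)
  | succ c ih =>
    have key : ∑ t ∈ Finset.range (m+1), (c + t)/m =
        (∑ t ∈ Finset.range m, (c + 1 + t)/m) + (c + 0)/m := by
      rw [Finset.sum_range_succ']
      congr 1
      refine Finset.sum_congr rfl ?_
      intro t _
      congr 1
      omega
    have key2 : ∑ t ∈ Finset.range (m+1), (c + t)/m = c + (c + m)/m := by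
      rw [Finset.sum_range_succ, ih]
    have h3 : (c + m)/m = c/m + 1 := by
      rw [Nat.add_div_right _ hm]
    simp only [Nat.add_zero] at key
    omega

lemma sum_hi_add (C : ZMod (2^(k+1))) :
    ∑ z : ZMod (2^k), hiMap k (C + sMap k z) = ((C.val : ℕ) : ZMod 2) := by
  have hterm : ∀ z : ZMod (2^k), hiMap k (C + sMap k z) =
      (((C.val + z.val) / 2^k : ℕ) : ZMod 2) := by
    intro z
    have h1 : C + sMap k z = ((C.val + z.val : ℕ) : ZMod (2^(k+1))) := by
      unfold sMap
      rw [Nat.cast_add]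
      congr 1
      simp [ZMod.natCast_val, ZMod.cast_id]
    rw [h1, hi_natCast]
  have step1 : ∑ z : ZMod (2^k), hiMap k (C + sMap k z) =
      ∑ t ∈ Finset.range (2^k), (((C.val + t)/2^k : ℕ) : ZMod 2) := by
    refine Finset.sum_nbij' (fun z => z.val) (fun t => ((t:ℕ) : ZMod (2^k))) ?_ ?_ ?_ ?_ ?_
    · intro z _
      exact Finset.mem_range.mpr (ZMod.val_lt z)
    · intro t _
      exact Finset.mem_univ _
    · intro z _
      simp [ZMod.natCast_val, ZMod.cast_id]
    · intro t ht
      exact ZMod.val_natCast_of_lt (Finset.mem_range.mp ht)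
    · intro z _
      exact hterm z
  rw [step1, ← Nat.cast_sum, sum_div_consecutive _ (two_pow_pos k)]
end Lifting3

/-! ## Chains of maps -/

noncomputable def chain {α : Type*} (g : ℕ → α → α) : ℕ → α → α
  | 0 => id
  | (i+1) => g i ∘ chain g i

lemma chain_bijective {α : Type*} (g : ℕ → α → α) (hg : ∀ i, Function.Bijective (g i)) :
    ∀ m, Function.Bijective (chain g m)
  | 0 => Function.bijective_id
  | (m+1) => (hg m).comp (chain_bijective g hg m)

lemma lifts_chain {k : ℕ} {G1 : ℕ → ZMod (2^(k+1)) → ZMod (2^(k+1))}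
    {Gk : ℕ → ZMod (2^k) → ZMod (2^k)} {ψ : ℕ → ZMod (2^k) → ZMod 2}
    (hL : ∀ i, Lifts k (G1 i) (Gk i) (ψ i)) (hbij : ∀ i, Function.Bijective (Gk i)) :
    ∀ m, ∃ Ψ, Lifts k (chain G1 m) (chain Gk m) Ψ ∧
      ∑ y : ZMod (2^k), Ψ y = ∑ i ∈ Finset.range m, ∑ y : ZMod (2^k), ψ i y := by
  intro m
  induction m with
  | zero =>
    refine ⟨fun _ => 0, ?_, by simp⟩
    intro y ε
    show sMap k y + iota k ε = sMap k y + iota k (0 + ε)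
    rw [zero_add]
  | succ m ih =>
    obtain ⟨Ψ, L, hs⟩ := ih
    refine ⟨fun y => ψ m (chain Gk m y) + Ψ y, ?_, ?_⟩
    · intro y ε
      show G1 m (chain G1 m (sMap k y + iota k ε)) = _
      rw [L, hL m]
      show sMap k (chain Gk (m+1) y) + _ = _
      congr 1
      rw [add_assoc]
    · rw [Finset.sum_add_distrib, hs, Finset.sum_range_succ, add_comm]
      congr 1
      exact Fintype.sum_bijective _ (chain_bijective Gk hbij m) _ _ (fun y => rfl)

/-! ## The key composite single-cycle lemma -/

lemma key_single_cycle (M : ℕ) (hModd : Odd M) (cv : ℕ → ℕ) (Hn : ℕ → ℤ_[2] → ℤ_[2])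
    (hcomp : ∀ i, Compatible (Hn i)) (herg : ∀ i, ErgodicZ (Hn i))
    (hsum : ∑ i ∈ Finset.range M, ((cv i : ℕ) : ZMod 2) = 0) :
    ∀ k, IsSingleCycle
      (chain (fun i => inducedMap k (fun z => ((cv i : ℕ) : ℤ_[2]) + Hn i z)) M) := by
  intro k
  induction k with
  | zero =>
    haveI : Subsingleton (ZMod (2^0)) := inferInstanceAs (Subsingleton (ZMod 1))
    intro a b
    exact ⟨0, Subsingleton.elim _ _⟩
  | succ k ih =>
    set g : ℕ → ℤ_[2] → ℤ_[2] := fun i z => ((cv i : ℕ) : ℤ_[2]) + Hn i z with hgdef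
    have hgcomp : ∀ i, Compatible (g i) := by
      intro i x y
      show ‖(((cv i : ℕ) : ℤ_[2]) + Hn i x) - (((cv i : ℕ) : ℤ_[2]) + Hn i y)‖ ≤ _
      rw [add_sub_add_left_eq_sub]
      exact hcomp i x y
    have hGdec : ∀ (m : ℕ) i, inducedMap m (g i) =
        fun a => ((cv i : ℕ) : ZMod (2^m)) + inducedMap m (Hn i) a := by
      intro m i
      funext a
      show padMod m (((cv i : ℕ) : ℤ_[2]) + Hn i _) = _
      rw [padMod_add, padMod_natCast]
      rfl
    have hgbij : ∀ (m : ℕ) i, Function.Bijective (inducedMap m (g i)) := by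
      intro m i
      rw [hGdec]
      exact (Function.Bijective.comp ⟨fun a b h => by
        exact add_right_injective _ h, fun b => ⟨b - _, by ring⟩⟩ ((herg i m).bijective))
    have hL : ∀ i, Lifts k (inducedMap (k+1) (g i)) (inducedMap k (g i))
        (fun y => hiMap k (inducedMap (k+1) (g i) (sMap k y))) :=
      fun i => lifts_induced (hgcomp i) (hgbij (k+1) i).1
    have hψsum : ∀ i, ∑ y : ZMod (2^k), hiMap k (inducedMap (k+1) (g i) (sMap k y)) =
        ((cv i : ℕ) : ZMod 2) + 1 := by
      intro i
      set C : ZMod (2^(k+1)) := ((cv i : ℕ) : ZMod (2^(k+1))) with hC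
      have LH := lifts_induced (hcomp i) ((herg i (k+1)).bijective).1
      have hterm : ∀ y : ZMod (2^k), hiMap k (inducedMap (k+1) (g i) (sMap k y)) =
          hiMap k (C + sMap k (inducedMap k (Hn i) y)) +
            hiMap k (inducedMap (k+1) (Hn i) (sMap k y)) := by
        intro y
        rw [hGdec]
        have h1 : inducedMap (k+1) (Hn i) (sMap k y) =
            sMap k (inducedMap k (Hn i) y) +
              iota k (hiMap k (inducedMap (k+1) (Hn i) (sMap k y))) := by
          have := LH y 0
          rw [iota_zero, add_zero, add_zero] at this
          exact this
        show hiMap k (C + inducedMap (k+1) (Hn i) (sMap k y)) = _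
        conv_lhs => rw [h1]
        rw [← add_assoc, hi_add_iota]
      calc ∑ y : ZMod (2^k), hiMap k (inducedMap (k+1) (g i) (sMap k y))
          = ∑ y : ZMod (2^k), (hiMap k (C + sMap k (inducedMap k (Hn i) y)) +
              hiMap k (inducedMap (k+1) (Hn i) (sMap k y))) :=
            Finset.sum_congr rfl (fun y _ => hterm y)
        _ = (∑ y : ZMod (2^k), hiMap k (C + sMap k (inducedMap k (Hn i) y))) +
              ∑ y : ZMod (2^k), hiMap k (inducedMap (k+1) (Hn i) (sMap k y)) :=
            Finset.sum_add_distrib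
        _ = (∑ z : ZMod (2^k), hiMap k (C + sMap k z)) + 1 := by
            congr 1
            · exact Fintype.sum_bijective _ ((herg i k).bijective) _ _ (fun y => rfl)
            · exact lifts_sum_one LH (herg i k) (herg i (k+1))
        _ = ((cv i : ℕ) : ZMod 2) + 1 := by
            rw [sum_hi_add]
            congr 1
            rw [hC, ZMod.val_natCast, ZMod.natCast_eq_natCast_iff]
            exact (Nat.mod_modEq (cv i) (2^(k+1))).of_dvd (dvd_pow_self 2 (Nat.succ_ne_zero k))
    obtain ⟨Ψ, LC, hΨ⟩ := lifts_chain hL (fun i => hgbij k i) M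
    refine lifts_single_cycle LC ih ?_
    rw [hΨ]
    have : ∑ i ∈ Finset.range M, ∑ y : ZMod (2^k),
        hiMap k (inducedMap (k+1) (g i) (sMap k y)) =
        ∑ i ∈ Finset.range M, (((cv i : ℕ) : ZMod 2) + 1) :=
      Finset.sum_congr rfl (fun i _ => hψsum i)
    rw [this, Finset.sum_add_distrib, hsum, zero_add, Finset.sum_const, Finset.card_range,
      nsmul_eq_mul, mul_one]
    obtain ⟨t, rfl⟩ := hModd
    push_cast
    rw [show ((2:ZMod 2)) = 0 by decide]
    ring

lemma chain_add_period {α : Type*} {g : ℕ → α → α} {M : ℕ} (hper : ∀ i, g (i + M) = g i) :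
    ∀ i, chain g (M + i) = chain g i ∘ chain g M := by
  intro i
  induction i with
  | zero => rfl
  | succ i ih =>
    show g (M + i) ∘ chain g (M + i) = (g i ∘ chain g i) ∘ chain g M
    rw [ih, show M + i = i + M by omega, hper i]
    rfl

lemma chain_add_mul {α : Type*} {g : ℕ → α → α} {M : ℕ} (hper : ∀ i, g (i + M) = g i) :
    ∀ (t i : ℕ), chain g (i + M * t) = chain g i ∘ (chain g M)^[t] := by
  intro t
  induction t with
  | zero => intro i; simp
  | succ t ih =>
    intro i
    have h1 : i + M * (t+1) = M + (i + M * t) := by ring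
    rw [h1, chain_add_period hper, ih, Function.comp_assoc, ← Function.iterate_succ]

lemma zmod_two_pow_one_ne {u v : ZMod (2^1)} (h : v ≠ u) : v = u + 1 := by
  have hrep : ∀ w : ZMod (2^1), ((w.val : ℕ) : ZMod (2^1)) = w := by
    intro w; simp [ZMod.natCast_val, ZMod.cast_id]
  have hu : u.val < 2^1 := ZMod.val_lt u
  have hv : v.val < 2^1 := ZMod.val_lt v
  have huv : u.val ≠ v.val := by
    intro hEq
    exact h (by rw [← hrep v, ← hrep u, hEq])
  have hcast : ((u.val + 1 : ℕ) : ZMod (2^1)) = ((u.val : ℕ) : ZMod (2^1)) + 1 := by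
    push_cast
    ring
  rw [← hrep v, ← hrep u, ← hcast, ZMod.natCast_eq_natCast_iff]
  have hu2 : u.val = 0 ∨ u.val = 1 := by omega
  have hv2 : v.val = 0 ∨ v.val = 1 := by omega
  rcases hu2 with h1 | h1 <;> rcases hv2 with h2 | h2 <;> rw [h1, h2] <;>
    first
      | (exfalso; omega)
      | decide

theorem main_aux (M n : ℕ) (hModd : Odd M) (hMpos : 0 < M) (hn : 1 ≤ n)
    (cv : ℕ → ℕ) (Hn : ℕ → ℤ_[2] → ℤ_[2])
    (hcomp : ∀ i, Compatible (Hn i)) (herg : ∀ i, ErgodicZ (Hn i))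
    (hcvper : ∀ i, cv (i + M) = cv i) (hHper : ∀ i, Hn (i + M) = Hn i)
    (hsum : ∑ i ∈ Finset.range M, ((cv i : ℕ) : ZMod 2) = 0)
    (hper : ∀ p : ℕ, 0 < p → p % M ≠ 0 →
      ∃ j : ℕ, ((cv (j + p) : ℕ) : ZMod 2) ≠ ((cv j : ℕ) : ZMod 2))
    (x : ℕ → ZMod (2^n))
    (hx : ∀ i : ℕ, x (i+1) =
      inducedMap n (fun z => ((cv i : ℕ) : ℤ_[2]) + Hn i z) (x i)) :
    ((∀ i : ℕ, x (i + M * 2^n) = x i) ∧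
      (∀ p : ℕ, 0 < p → (∀ i : ℕ, x (i + p) = x i) → M * 2^n ≤ p)) ∧
    (∀ a : ZMod (2^n),
      ((Finset.range (M * 2^n)).filter (fun i => x i = a)).card = M) := by
  classical
  set g : ℕ → ZMod (2^n) → ZMod (2^n) :=
    fun i => inducedMap n (fun z => ((cv i : ℕ) : ℤ_[2]) + Hn i z) with hg
  have hper_g : ∀ i, g (i + M) = g i := by
    intro i
    simp only [hg, hcvper i, hHper i]
  have hchain : ∀ i, x i = chain g i (x 0) := by
    intro i
    induction i with
    | zero => rfl
    | succ i ih => rw [hx i, ih]; rfl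
  have Fsc : IsSingleCycle (chain g M) :=
    key_single_cycle M hModd cv Hn hcomp herg hsum n
  have cardn : Fintype.card (ZMod (2^n)) = 2^n := ZMod.card _
  have hFcard : ∀ a, (chain g M)^[2^n] a = a := by
    intro a
    have := Fsc.iterate_card a
    rwa [cardn] at this
  have hxshift : ∀ i t, x (i + M * t) = chain g i ((chain g M)^[t] (x 0)) := by
    intro i t
    rw [hchain (i + M * t), chain_add_mul hper_g]
    rfl
  have hgbij : ∀ i, Function.Bijective (g i) := by
    intro i
    have hdec : g i = fun a => ((cv i : ℕ) : ZMod (2^n)) + inducedMap n (Hn i) a := by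
      funext a
      show padMod n (((cv i : ℕ) : ℤ_[2]) + Hn i _) = _
      rw [padMod_add, padMod_natCast]
      rfl
    rw [hdec]
    exact Function.Bijective.comp ⟨fun a b h => add_right_injective _ h,
      fun b => ⟨b - _, by ring⟩⟩ ((herg i n).bijective)
  refine ⟨⟨?_, ?_⟩, ?_⟩
  · intro i
    rw [hxshift i (2^n), hFcard, ← hchain]
  · -- minimality
    intro p hp hperiod
    have card1 : Fintype.card (ZMod (2^1)) = 2^1 := ZMod.card _
    have hstep1 : ∀ (i : ℕ) (u : ZMod (2^1)), inducedMap 1 (Hn i) u = u + 1 := by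
      intro i u
      refine zmod_two_pow_one_ne ?_
      have h2 := (herg i 1).no_small_period u 1 (by norm_num) (by rw [card1]; norm_num)
      simpa using h2
    set yv : ℕ → ZMod (2^1) := fun i => padMod 1 (((x i).val : ℕ) : ℤ_[2]) with hyv
    have hstep : ∀ i, yv (i+1) = yv i + (1 + ((cv i : ℕ) : ZMod (2^1))) := by
      intro i
      show padMod 1 (((x (i+1)).val : ℕ) : ℤ_[2]) = _
      rw [hx i]
      show padMod 1 (((padMod n (((cv i : ℕ) : ℤ_[2]) +
        Hn i (((x i).val : ℕ) : ℤ_[2]))).val : ℕ) : ℤ_[2]) = _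
      rw [padMod_lower hn, padMod_add, padMod_natCast]
      have h2 : padMod 1 (Hn i (((x i).val : ℕ) : ℤ_[2])) =
          inducedMap 1 (Hn i) (padMod 1 (((x i).val : ℕ) : ℤ_[2])) :=
        (inducedMap_padMod (hcomp i) 1 _).symm
      rw [h2, hstep1]
      show _ = padMod 1 (((x i).val : ℕ) : ℤ_[2]) + _
      ring
    have hiter : ∀ i t, yv (i + t) =
        yv i + ∑ l ∈ Finset.range t, (1 + ((cv (i+l) : ℕ) : ZMod (2^1))) := by
      intro i t
      induction t with
      | zero => simp
      | succ t ih =>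
        show yv ((i + t) + 1) = _
        rw [hstep, ih, Finset.sum_range_succ, add_assoc]
    have hS : ∀ i, ∑ l ∈ Finset.range p, (1 + ((cv (i+l) : ℕ) : ZMod (2^1))) = 0 := by
      intro i
      have h1 : yv (i + p) = yv i := by
        show padMod 1 (((x (i+p)).val : ℕ) : ℤ_[2]) = padMod 1 (((x i).val : ℕ) : ℤ_[2])
        rw [hperiod i]
      rw [hiter i p] at h1
      exact add_eq_left.mp h1
  -- κ periodicity
    have hκ : ∀ i, ((cv (i+p) : ℕ) : ZMod (2^1)) = ((cv i : ℕ) : ZMod (2^1)) := by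
      intro i
      have e1 := hS i
      have e2 := hS (i+1)
      have e3 : ∑ l ∈ Finset.range (p+1), (1 + ((cv (i+l) : ℕ) : ZMod (2^1))) =
          (∑ l ∈ Finset.range p, (1 + ((cv (i+1+l) : ℕ) : ZMod (2^1)))) +
            (1 + ((cv (i+0) : ℕ) : ZMod (2^1))) := by
        rw [Finset.sum_range_succ']
        congr 1
        refine Finset.sum_congr rfl ?_
        intro l _
        have h4 : i + (l+1) = i+1+l := by omega
        rw [h4]
      have e4 : ∑ l ∈ Finset.range (p+1), (1 + ((cv (i+l) : ℕ) : ZMod (2^1))) =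
          (∑ l ∈ Finset.range p, (1 + ((cv (i+l) : ℕ) : ZMod (2^1)))) +
            (1 + ((cv (i+p) : ℕ) : ZMod (2^1))) := Finset.sum_range_succ _ _
      have e5 := e3.symm.trans e4
      rw [e1, e2, zero_add, zero_add, Nat.add_zero] at e5
      exact (add_left_cancel e5).symm
    have hMp : p % M = 0 := by
      by_contra hr
      obtain ⟨j, hj⟩ := hper p hp hr
      apply hj
      have h6 := hκ j
      rw [ZMod.natCast_eq_natCast_iff] at h6 ⊢
      have h21 : (2:ℕ)^1 = 2 := by norm_num
      rw [h21] at h6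
      exact h6
    obtain ⟨q, hq⟩ := Nat.dvd_of_mod_eq_zero hMp
    have hq0 : 0 < q := by
      rcases Nat.eq_zero_or_pos q with h0 | h1
      · subst h0; omega
      · exact h1
    have hfix : (chain g M)^[q] (x 0) = x 0 := by
      have h1 := hperiod 0
      rw [hq, hxshift 0 q] at h1
      exact h1
    have hle : 2^n ≤ q := by
      have := Fsc.card_le_period hq0 hfix
      rwa [cardn] at this
    rw [hq]
    exact Nat.mul_le_mul_left M hle
  · -- counting
    intro a
    have claim : ∀ r : ℕ,
        (∑ t ∈ Finset.range (2^n), if x (r + M * t) = a then 1 else 0) = 1 := by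
      intro r
      have hbij : Function.Bijective
          (fun t : Fin (2^n) => chain g r ((chain g M)^[(t:ℕ)] (x 0))) :=
        (chain_bijective g hgbij r).comp (enum_bijective' Fsc (x 0) cardn.symm)
      calc (∑ t ∈ Finset.range (2^n), if x (r + M * t) = a then 1 else 0)
          = ∑ t : Fin (2^n), (if x (r + M * (t:ℕ)) = a then 1 else 0) :=
            (Fin.sum_univ_eq_sum_range (fun t => if x (r + M * t) = a then 1 else 0)
              (2^n)).symm
        _ = ∑ t : Fin (2^n),
              (if chain g r ((chain g M)^[(t:ℕ)] (x 0)) = a then 1 else 0) := by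
            refine Finset.sum_congr rfl ?_
            intro t _
            rw [hxshift r (t:ℕ)]
        _ = ∑ b : ZMod (2^n), (if b = a then 1 else 0) :=
            Fintype.sum_bijective _ hbij _ _ (fun t => rfl)
        _ = 1 := by simp
    rw [Finset.card_filter]
    calc (∑ i ∈ Finset.range (M * 2^n), if x i = a then 1 else 0)
        = ∑ rt ∈ Finset.range M ×ˢ Finset.range (2^n),
            (if x (rt.1 + M * rt.2) = a then 1 else 0) := by
          refine Finset.sum_nbij' (fun i => (i % M, i / M))
            (fun rt => rt.1 + M * rt.2) ?_ ?_ ?_ ?_ ?_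
          · intro i hi
            rw [Finset.mem_range] at hi
            refine Finset.mem_product.mpr
              ⟨Finset.mem_range.mpr (Nat.mod_lt _ hMpos), Finset.mem_range.mpr ?_⟩
            rw [Nat.div_lt_iff_lt_mul hMpos, Nat.mul_comm]
            exact hi
          · intro rt hrt
            rw [Finset.mem_product, Finset.mem_range, Finset.mem_range] at hrt
            refine Finset.mem_range.mpr ?_
            obtain ⟨h1, h2⟩ := hrt
            calc rt.1 + M * rt.2 < M + M * rt.2 := by omega
              _ = M * (rt.2 + 1) := by ring
              _ ≤ M * 2^n := Nat.mul_le_mul_left M h2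
          · intro i _
            exact Nat.mod_add_div i M
          · intro rt hrt
            rw [Finset.mem_product, Finset.mem_range, Finset.mem_range] at hrt
            have hm : (rt.1 + M * rt.2) % M = rt.1 := by
              rw [Nat.add_mul_mod_self_left, Nat.mod_eq_of_lt hrt.1]
            have hd : (rt.1 + M * rt.2) / M = rt.2 := by
              rw [Nat.add_mul_div_left _ _ hMpos, Nat.div_eq_of_lt hrt.1, Nat.zero_add]
            simp [hm, hd]
          · intro i _
            rw [Nat.mod_add_div]
      _ = ∑ r ∈ Finset.range M, ∑ t ∈ Finset.range (2^n),
            (if x (r + M * t) = a then 1 else 0) := by rw [Finset.sum_product]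
      _ = ∑ r ∈ Finset.range M, 1 := Finset.sum_congr rfl (fun r _ => claim r)
      _ = M := by simp

/-- univariate counter-dependent generator: let `M` be odd,
`c : Fin M → ZMod 2` with even sum and least period of its periodic extension
exactly `M`; let `H_j` be compatible ergodic maps and `c'_j ∈ Z/2^n` reduce to
`c_j` mod 2. Then the states `x_{i+1} = (c'_{i mod M} + H_{i mod M}(x_i)) mod 2^n`
form a purely periodic sequence of least period exactly `M·2^n`, and every
element of `Z/2^n` occurs exactly `M` times per period. -/
theorem counter_dependent_generator (M n : ℕ) (hM : Odd M)
    (hMpos : 0 < M) (hn : 1 ≤ n)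
    (c : Fin M → ZMod 2)
    (hsum : ∑ j : Fin M, c j = 0)
    (hper : ∀ p : ℕ, 0 < p → p < M →
      ∃ j : ℕ, c ⟨(j + p) % M, Nat.mod_lt _ hMpos⟩ ≠ c ⟨j % M, Nat.mod_lt _ hMpos⟩)
    (H : Fin M → ℤ_[2] → ℤ_[2])
    (hH : ∀ j : Fin M, Compatible (H j) ∧ ErgodicZ (H j))
    (c' : Fin M → ZMod (2^n))
    (hc' : ∀ j : Fin M, (((c' j).val : ℕ) : ZMod 2) = c j)
    (x : ℕ → ZMod (2^n))
    (hx : ∀ i : ℕ, x (i+1) =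
      padMod n ((((c' ⟨i % M, Nat.mod_lt _ hMpos⟩).val : ℕ) : ℤ_[2]) +
        H ⟨i % M, Nat.mod_lt _ hMpos⟩ (((x i).val : ℕ) : ℤ_[2]))) :
    ((∀ i : ℕ, x (i + M * 2^n) = x i) ∧
      (∀ p : ℕ, 0 < p → (∀ i : ℕ, x (i + p) = x i) → M * 2^n ≤ p)) ∧
    (∀ a : ZMod (2^n),
      ((Finset.range (M * 2^n)).filter (fun i => x i = a)).card = M) := by

  have hcv2 : ∀ i : ℕ, (((c' ⟨i % M, Nat.mod_lt _ hMpos⟩).val : ℕ) : ZMod 2) =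
      c ⟨i % M, Nat.mod_lt _ hMpos⟩ := fun i => hc' _
  refine main_aux M n hM hMpos hn
    (fun i => (c' ⟨i % M, Nat.mod_lt _ hMpos⟩).val)
    (fun i => H ⟨i % M, Nat.mod_lt _ hMpos⟩)
    (fun i => (hH _).1) (fun i => (hH _).2)
    ?_ ?_ ?_ ?_ x ?_
  · intro i
    have h1 : (i + M) % M = i % M := Nat.add_mod_right i M
    simp only [h1]
  · intro i
    have h1 : (i + M) % M = i % M := Nat.add_mod_right i M
    simp only [h1]
  · -- sum
    rw [← Fin.sum_univ_eq_sum_range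
      (fun i => (((c' ⟨i % M, Nat.mod_lt _ hMpos⟩).val : ℕ) : ZMod 2)) M, ← hsum]
    refine Finset.sum_congr rfl ?_
    intro j _
    have hj : ((j:ℕ) % M) = (j:ℕ) := Nat.mod_eq_of_lt j.isLt
    have hfin : (⟨(j:ℕ) % M, Nat.mod_lt _ hMpos⟩ : Fin M) = j := Fin.ext hj
    rw [hcv2, hfin]
  · -- least period hypothesis
    intro p hp hr
    obtain ⟨j, hj⟩ := hper (p % M) (Nat.pos_of_ne_zero hr) (Nat.mod_lt _ hMpos)
    refine ⟨j, ?_⟩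
    rw [hcv2, hcv2]
    intro hEq
    apply hj
    have hmm : (j + p) % M = (j + p % M) % M := by
      conv_lhs => rw [Nat.add_mod]
      conv_rhs => rw [Nat.add_mod, Nat.mod_mod_of_dvd p dvd_rfl]
    have hfin : (⟨(j + p) % M, Nat.mod_lt _ hMpos⟩ : Fin M) =
        ⟨(j + p % M) % M, Nat.mod_lt _ hMpos⟩ := Fin.ext hmm
    rw [hfin] at hEq
    exact hEq
  · intro i
    exact hx i
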